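/- Let Ω_0 := ℝ×ω ⊆ ℝ^d be the straight tube. Then λ∞(Ω_0) = λ1(ω), where λ∞(Ω_0) := sup over compact sets K ⊆ Ω_0 of λ1(Ω_0\K): the essential spectral threshold of the straight tube equals the spectral threshold of its cross-section. -/

import Mathlib

open MeasureTheory Set Filter

noncomputable section

abbrev E (m : ℕ) := EuclideanSpace ℝ (Fin m)

/-- The spectral threshold `λ₁(Ω)` of an open set `Ω ⊆ ℝ^m`: the infimum of the
Rayleigh quotient `(∫_Ω |∇u|^p)/(∫_Ω |u|^p)` over nonzero smooth compactly
supported functions `u` with support in `Ω`. -/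
def lam1 (p : ℝ) {m : ℕ} (Ω : Set (E m)) : ℝ :=
  sInf {r : ℝ | ∃ u : E m → ℝ, ContDiff ℝ (⊤ : ℕ∞) u ∧ HasCompactSupport u ∧
    tsupport u ⊆ Ω ∧ u ≠ 0 ∧
    r = (∫ x in Ω, ‖fderiv ℝ u x‖ ^ p) / (∫ x in Ω, |u x| ^ p)}

/-- The straight tube `ℝ × ω`. -/
def tube {m : ℕ} (ω : Set (E m)) : Set (ℝ × E m) := Set.univ ×ˢ ω

/-- Longitudinal partial derivative `∂_s ψ`. -/
def dS {m : ℕ} (ψ : ℝ × E m → ℝ) (x : ℝ × E m) : ℝ := fderiv ℝ ψ x (1, 0)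

/-- Transverse partial derivative `∂_{t_μ} ψ`. -/
def dT {m : ℕ} (ψ : ℝ × E m → ℝ) (x : ℝ × E m) (μ : Fin m) : ℝ :=
  fderiv ℝ ψ x (0, EuclideanSpace.single μ 1)

/-- `|∇u|^p` (Euclidean norm of the full gradient, to the power `p`) on `ℝ × ℝ^m`. -/
def gradP (p : ℝ) {m : ℕ} (u : ℝ × E m → ℝ) (x : ℝ × E m) : ℝ :=
  (dS u x ^ 2 + ∑ μ, dT u x μ ^ 2) ^ (p / 2)

/-- The spectral threshold `λ₁(Ω)` of an open subset of the product space `ℝ × ℝ^m`. -/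
def lam1Prod (p : ℝ) {m : ℕ} (Ω : Set (ℝ × E m)) : ℝ :=
  sInf {r : ℝ | ∃ u : ℝ × E m → ℝ, ContDiff ℝ (⊤ : ℕ∞) u ∧ HasCompactSupport u ∧
    tsupport u ⊆ Ω ∧ u ≠ 0 ∧
    r = (∫ x in Ω, gradP p u x) / (∫ x in Ω, |u x| ^ p)}

lemma sq_rpow_half (x p : ℝ) (hp : 0 ≤ p) : ((x ^ 2 : ℝ)) ^ (p / 2) = |x| ^ p := by
  have h1 : (x ^ 2 : ℝ) = |x| ^ (2:ℕ) := by rw [sq_abs]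
  rw [h1, ← Real.rpow_natCast |x| 2, ← Real.rpow_mul (abs_nonneg x)]
  ring_nf

lemma key_ineq {q η : ℝ} (hq : 0 < q) (hη : 0 < η) (a b : ℝ) (ha : 0 ≤ a) (hb : 0 ≤ b) :
    (a + b) ^ q ≤ (1 + 1/η) ^ q * a ^ q + (1 + η) ^ q * b ^ q := by
  have h1η : (0:ℝ) < 1 + 1/η := by positivity
  have h2η : (0:ℝ) < 1 + η := by positivity
  rcases le_or_gt a (η * b) with h | h
  · have hab : a + b ≤ (1 + η) * b := by nlinarith
    have := Real.rpow_le_rpow (by positivity) hab hq.le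
    rw [Real.mul_rpow h2η.le hb] at this
    have h0 : 0 ≤ (1 + 1/η) ^ q * a ^ q := by positivity
    linarith
  · have hba : b ≤ a / η := by
      rw [le_div_iff₀ hη]; nlinarith
    have hab : a + b ≤ (1 + 1/η) * a := by
      have : a / η = (1/η) * a := by ring
      rw [this] at hba; nlinarith
    have := Real.rpow_le_rpow (by positivity) hab hq.le
    rw [Real.mul_rpow h1η.le ha] at this
    have h0 : 0 ≤ (1 + η) ^ q * b ^ q := by positivity
    linarith

/-- Norm squared of a functional on Euclidean space as sum of squares of coordinates. -/
lemma norm_sq_functional {m : ℕ} (L : E m →L[ℝ] ℝ) :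
    ‖L‖ ^ (2:ℕ) = ∑ μ : Fin m, (L (EuclideanSpace.single μ 1)) ^ 2 := by
  set w := (InnerProductSpace.toDual ℝ (E m)).symm L with hw
  have hnorm : ‖L‖ = ‖w‖ := by
    rw [hw, LinearIsometryEquiv.norm_map]
  have happ : ∀ e : E m, L e = inner ℝ w e := by
    intro e; rw [hw]; exact (InnerProductSpace.toDual_symm_apply).symm
  have hcoord : ∀ μ : Fin m, L (EuclideanSpace.single μ 1) = w μ := by
    intro μ
    rw [happ, real_inner_comm, EuclideanSpace.inner_single_left]
    simp
  rw [hnorm]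
  have := EuclideanSpace.norm_eq w
  rw [this, Real.sq_sqrt (by positivity)]
  refine Finset.sum_congr rfl fun μ _ => ?_
  rw [hcoord μ]
  simp [sq_abs]

lemma fderiv_zero_of_not_mem_tsupport {X Y : Type*} [NormedAddCommGroup X] [NormedSpace ℝ X]
    [NormedAddCommGroup Y] [NormedSpace ℝ Y] {f : X → Y} {x : X} (h : x ∉ tsupport f) :
    fderiv ℝ f x = 0 := by
  by_contra hne
  exact h (support_fderiv_subset ℝ (Function.mem_support.2 hne))

variable {m : ℕ}

lemma slice_fderiv (u : ℝ × E m → ℝ) (hu : Differentiable ℝ u) (s : ℝ) (t : E m) (e : E m) :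
    fderiv ℝ (fun t' => u (s, t')) t e = fderiv ℝ u (s, t) (0, e) := by
  have h1 : HasFDerivAt (fun t' : E m => ((s, t') : ℝ × E m))
      ((0 : E m →L[ℝ] ℝ).prod (ContinuousLinearMap.id ℝ (E m))) t :=
    HasFDerivAt.prodMk (hasFDerivAt_const s t) (hasFDerivAt_id t)
  have h2 : HasFDerivAt u (fderiv ℝ u (s, t)) (s, t) := (hu (s, t)).hasFDerivAt
  have h3 := h2.comp t h1
  have h4 : (fun t' => u (s, t')) = u ∘ Prod.mk s := rfl
  rw [h4, h3.fderiv]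
  rfl

lemma slice_contDiff (u : ℝ × E m → ℝ) (hu : ContDiff ℝ (⊤:ℕ∞) u) (s : ℝ) :
    ContDiff ℝ (⊤:ℕ∞) (fun t' => u (s, t')) :=
  hu.comp (contDiff_prodMk_right s)

lemma slice_hcs (u : ℝ × E m → ℝ) (hcs : HasCompactSupport u) (s : ℝ) :
    HasCompactSupport (fun t' => u (s, t')) := by
  apply HasCompactSupport.intro (hcs.isCompact.image continuous_snd)
  intro t ht
  by_contra hne
  exact ht ⟨(s, t), subset_tsupport u (Function.mem_support.2 hne), rfl⟩

lemma slice_tsupport (u : ℝ × E m → ℝ) {Ω : Set (E m)} (h : tsupport u ⊆ Set.univ ×ˢ Ω) (s : ℝ) :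
    tsupport (fun t' => u (s, t')) ⊆ Ω := by
  have hclosed : IsClosed {t : E m | (s, t) ∈ tsupport u} :=
    (isClosed_tsupport u).preimage (Continuous.prodMk_right s)
  have : Function.support (fun t' => u (s, t')) ⊆ {t : E m | (s, t) ∈ tsupport u} := by
    intro t ht
    exact subset_tsupport u (Function.mem_support.2 ht)
  refine (closure_minimal this hclosed).trans ?_
  intro t ht
  exact (h ht).2

lemma cont_abs_rpow {X : Type*} [TopologicalSpace X] {f : X → ℝ} (hf : Continuous f) {p : ℝ}
    (hp : 0 ≤ p) : Continuous fun x => |f x| ^ p :=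
  (continuous_abs.comp hf).rpow_const fun _ => Or.inr hp

lemma hcs_abs_rpow {X : Type*} [TopologicalSpace X] [T2Space X] {f : X → ℝ} (hf : HasCompactSupport f)
    {p : ℝ} (hp : 0 < p) : HasCompactSupport fun x => |f x| ^ p := by
  apply HasCompactSupport.intro hf.isCompact
  intro x hx
  have : f x = 0 := image_eq_zero_of_notMem_tsupport hx
  simp [this, Real.zero_rpow hp.ne']

lemma cont_dS {u : ℝ × E m → ℝ} (hu : ContDiff ℝ (⊤:ℕ∞) u) : Continuous (dS u) :=
  ((hu.continuous_fderiv (by simp)).clm_apply continuous_const)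

lemma cont_dT {u : ℝ × E m → ℝ} (hu : ContDiff ℝ (⊤:ℕ∞) u) (μ : Fin m) :
    Continuous fun x => dT u x μ :=
  ((hu.continuous_fderiv (by simp)).clm_apply continuous_const)

lemma cont_gradP {p : ℝ} (hp : 0 ≤ p) {u : ℝ × E m → ℝ} (hu : ContDiff ℝ (⊤:ℕ∞) u) :
    Continuous (gradP p u) := by
  apply Continuous.rpow_const
  · exact ((cont_dS hu).pow 2).add (continuous_finset_sum _ fun μ _ => (cont_dT hu μ).pow 2)
  · intro x; right; positivity

lemma gradP_eq_zero_of_nmem {p : ℝ} (hp : 0 < p) {u : ℝ × E m → ℝ} {x : ℝ × E m}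
    (hx : x ∉ tsupport u) : gradP p u x = 0 := by
  have h0 : fderiv ℝ u x = 0 := fderiv_zero_of_not_mem_tsupport hx
  unfold gradP dS dT
  rw [h0]
  simp [Real.zero_rpow (by positivity : p/2 ≠ 0)]

lemma hcs_gradP {p : ℝ} (hp : 0 < p) {u : ℝ × E m → ℝ} (hu : HasCompactSupport u) :
    HasCompactSupport (gradP p u) := by
  apply HasCompactSupport.intro hu.isCompact
  intro x hx
  exact gradP_eq_zero_of_nmem hp hx

/-- Positivity of `∫_Ω |f|^p` for a nonzero continuous `f` supported in open `Ω`. -/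
lemma int_pos {X : Type*} [MeasureSpace X] [TopologicalSpace X] [T2Space X] [BorelSpace X]
    [(volume : Measure X).IsOpenPosMeasure] [IsFiniteMeasureOnCompacts (volume : Measure X)]
    {f : X → ℝ} {Ω : Set X} (hΩo : IsOpen Ω) (hf : Continuous f) (hcs : HasCompactSupport f)
    (hsupp : tsupport f ⊆ Ω) (hne : f ≠ 0) {p : ℝ} (hp : 0 < p) :
    0 < ∫ x in Ω, |f x| ^ p := by
  have hg : Continuous fun x => |f x| ^ p := cont_abs_rpow hf hp.le
  have hgi : Integrable (fun x => |f x| ^ p) :=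
    hg.integrable_of_hasCompactSupport (by
      apply HasCompactSupport.intro hcs.isCompact
      intro x hx
      simp [image_eq_zero_of_notMem_tsupport hx, Real.zero_rpow hp.ne'])
  rw [setIntegral_pos_iff_support_of_nonneg_ae]
  · have hss : Function.support (fun x => |f x| ^ p) = Function.support f := by
      ext x
      simp only [Function.mem_support]
      constructor
      · intro h h0; exact h (by simp [h0, Real.zero_rpow hp.ne'])
      · intro h h0
        apply h
        have habs : |f x| ^ p = 0 := h0
        have := (Real.rpow_eq_zero (abs_nonneg (f x)) hp.ne').1 habs
        exact abs_eq_zero.1 this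
    rw [hss]
    have hopen : IsOpen (Function.support f) := hf.isOpen_support
    obtain ⟨x0, hx0⟩ := Function.ne_iff.1 hne
    have hsub : Function.support f ∩ Ω = Function.support f :=
      inter_eq_left.2 ((subset_tsupport f).trans hsupp)
    rw [hsub]
    exact hopen.measure_pos volume ⟨x0, Function.mem_support.2 hx0⟩
  · filter_upwards with x using by positivity
  · exact hgi.integrableOn

lemma lam1_nonneg (p : ℝ) {ω : Set (E m)} (hωm : MeasurableSet ω) : 0 ≤ lam1 p ω := by
  apply Real.sInf_nonneg
  rintro r ⟨u, _, _, _, _, rfl⟩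
  apply div_nonneg
  · exact setIntegral_nonneg hωm fun x _ => Real.rpow_nonneg (norm_nonneg _) p
  · exact setIntegral_nonneg hωm fun x _ => Real.rpow_nonneg (abs_nonneg _) p

lemma quotient_lower {p : ℝ} (hp : 1 < p) {ω : Set (E m)} (hωo : IsOpen ω)
    {u : ℝ × E m → ℝ} (hu : ContDiff ℝ (⊤:ℕ∞) u) (hcs : HasCompactSupport u)
    (hsupp : tsupport u ⊆ tube ω) :
    lam1 p ω * ∫ x, |u x| ^ p ≤ ∫ x, gradP p u x := by
  have hp0 : (0:ℝ) < p := by linarith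
  have hlam0 : 0 ≤ lam1 p ω := lam1_nonneg p hωo.measurableSet
  have hGc : Continuous fun x : ℝ × E m => |u x| ^ p := cont_abs_rpow hu.continuous hp0.le
  have hGcs : HasCompactSupport fun x : ℝ × E m => |u x| ^ p := hcs_abs_rpow hcs hp0
  have hGi : Integrable (fun x : ℝ × E m => |u x| ^ p) :=
    hGc.integrable_of_hasCompactSupport hGcs
  have hFi : Integrable (gradP p u) :=
    (cont_gradP hp0.le hu).integrable_of_hasCompactSupport (hcs_gradP hp0 hcs)
  rw [show ((volume : Measure (ℝ × E m))) = (volume : Measure ℝ).prod (volume : Measure (E m))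
    from Measure.volume_eq_prod ℝ (E m)] at hGi hFi ⊢
  rw [integral_prod _ hGi, integral_prod _ hFi]
  -- pointwise-in-s inequality
  have key : ∀ s : ℝ, lam1 p ω * ∫ t, |u (s, t)| ^ p ≤ ∫ t, gradP p u (s, t) := by
    intro s
    set vs : E m → ℝ := fun t => u (s, t) with hvs
    have hvsm : ContDiff ℝ (⊤:ℕ∞) vs := slice_contDiff u hu s
    have hvcs : HasCompactSupport vs := slice_hcs u hcs s
    have hvsupp : tsupport vs ⊆ ω := slice_tsupport u hsupp s
    -- continuity / integrability of slice integrands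
    have hNc : Continuous fun t => ‖fderiv ℝ vs t‖ ^ p :=
      ((hvsm.continuous_fderiv (by simp)).norm).rpow_const fun _ => Or.inr hp0.le
    have hNcs : HasCompactSupport fun t => ‖fderiv ℝ vs t‖ ^ p := by
      apply HasCompactSupport.intro hvcs.isCompact
      intro t ht
      rw [fderiv_zero_of_not_mem_tsupport ht]
      simp [Real.zero_rpow hp0.ne']
    have hNi : Integrable (fun t => ‖fderiv ℝ vs t‖ ^ p) :=
      hNc.integrable_of_hasCompactSupport hNcs
    have hFsi : Integrable (fun t => gradP p u (s, t)) := by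
      apply Continuous.integrable_of_hasCompactSupport
      · exact (cont_gradP hp0.le hu).comp (Continuous.prodMk_right s)
      · exact slice_hcs (gradP p u) (hcs_gradP hp0 hcs) s
    -- pointwise comparison
    have hpt : ∀ t, ‖fderiv ℝ vs t‖ ^ p ≤ gradP p u (s, t) := by
      intro t
      have hsum : (∑ μ : Fin m, dT u (s, t) μ ^ 2) = ‖fderiv ℝ vs t‖ ^ (2:ℕ) := by
        rw [norm_sq_functional]
        refine (Finset.sum_congr rfl fun μ _ => ?_).symm
        rw [slice_fderiv u (hu.differentiable (by simp)) s t]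
        rfl
      have h1 : ‖fderiv ℝ vs t‖ ^ p = ((‖fderiv ℝ vs t‖ ^ (2:ℕ) : ℝ)) ^ (p/2) := by
        rw [sq_rpow_half _ p hp0.le, abs_of_nonneg (norm_nonneg _)]
      rw [h1]
      unfold gradP
      rw [hsum]
      apply Real.rpow_le_rpow (by positivity) (by nlinarith [sq_nonneg (dS u (s, t))])
        (by positivity)
    by_cases hvz : vs = 0
    · have : ∀ t, |u (s, t)| ^ p = 0 := by
        intro t
        have : u (s, t) = 0 := congrFun hvz t
        simp [this, Real.zero_rpow hp0.ne']
      simp only [this]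
      simp
      exact integral_nonneg fun t => by unfold gradP; positivity
    · -- vs ≠ 0 : use the definition of lam1
      have hD : 0 < ∫ t in ω, |vs t| ^ p :=
        int_pos hωo hvsm.continuous hvcs hvsupp hvz hp0
      have hmem : (∫ t in ω, ‖fderiv ℝ vs t‖ ^ p) / (∫ t in ω, |vs t| ^ p) ∈
          {r : ℝ | ∃ v : E m → ℝ, ContDiff ℝ (⊤ : ℕ∞) v ∧ HasCompactSupport v ∧
            tsupport v ⊆ ω ∧ v ≠ 0 ∧
            r = (∫ x in ω, ‖fderiv ℝ v x‖ ^ p) / (∫ x in ω, |v x| ^ p)} :=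
        ⟨vs, hvsm, hvcs, hvsupp, hvz, rfl⟩
      have hbdd : BddBelow {r : ℝ | ∃ v : E m → ℝ, ContDiff ℝ (⊤ : ℕ∞) v ∧ HasCompactSupport v ∧
            tsupport v ⊆ ω ∧ v ≠ 0 ∧
            r = (∫ x in ω, ‖fderiv ℝ v x‖ ^ p) / (∫ x in ω, |v x| ^ p)} := by
        refine ⟨0, ?_⟩
        rintro r ⟨v, _, _, _, _, rfl⟩
        apply div_nonneg
        · exact setIntegral_nonneg hωo.measurableSet fun x _ => Real.rpow_nonneg (norm_nonneg _) p
        · exact setIntegral_nonneg hωo.measurableSet fun x _ => Real.rpow_nonneg (abs_nonneg _) p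
      have hle : lam1 p ω ≤ (∫ t in ω, ‖fderiv ℝ vs t‖ ^ p) / (∫ t in ω, |vs t| ^ p) :=
        csInf_le hbdd hmem
      have hNconv : ∫ t in ω, ‖fderiv ℝ vs t‖ ^ p = ∫ t, ‖fderiv ℝ vs t‖ ^ p := by
        apply setIntegral_eq_integral_of_forall_compl_eq_zero
        intro t ht
        rw [fderiv_zero_of_not_mem_tsupport fun hc => ht (hvsupp hc)]
        simp [Real.zero_rpow hp0.ne']
      have hDconv : ∫ t in ω, |vs t| ^ p = ∫ t, |vs t| ^ p := by
        apply setIntegral_eq_integral_of_forall_compl_eq_zero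
        intro t ht
        rw [image_eq_zero_of_notMem_tsupport fun hc => ht (hvsupp hc)]
        simp [Real.zero_rpow hp0.ne']
      rw [hNconv, hDconv] at hle
      rw [hDconv] at hD
      have hmul : lam1 p ω * ∫ t, |vs t| ^ p ≤ ∫ t, ‖fderiv ℝ vs t‖ ^ p :=
        (le_div_iff₀ hD).1 hle
      calc lam1 p ω * ∫ t, |u (s, t)| ^ p ≤ ∫ t, ‖fderiv ℝ vs t‖ ^ p := hmul
        _ ≤ ∫ t, gradP p u (s, t) := integral_mono hNi hFsi hpt
  -- integrate in s
  rw [← integral_const_mul]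
  exact integral_mono ((hGi.integral_prod_left).const_mul _) (hFi.integral_prod_left) key

/-- Existence of a nonzero smooth compactly supported function in a nonempty open set. -/
lemma exists_test {X : Type*} [NormedAddCommGroup X] [NormedSpace ℝ X] [HasContDiffBump X]
    [FiniteDimensional ℝ X] {Ω : Set X} (hΩo : IsOpen Ω) (hΩne : Ω.Nonempty) :
    ∃ v : X → ℝ, ContDiff ℝ (⊤ : ℕ∞) v ∧ HasCompactSupport v ∧ tsupport v ⊆ Ω ∧ v ≠ 0 := by
  obtain ⟨x0, hx0⟩ := hΩne
  obtain ⟨r, hr, hball⟩ := Metric.isOpen_iff.1 hΩo x0 hx0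
  refine ⟨(⟨r/4, r/2, by positivity, by linarith⟩ : ContDiffBump x0), ?_, ?_, ?_, ?_⟩
  · exact ContDiffBump.contDiff _
  · exact ContDiffBump.hasCompactSupport _
  · rw [ContDiffBump.tsupport_eq]
    refine subset_trans ?_ hball
    intro y hy
    simp only [Metric.mem_closedBall] at hy
    simp only [Metric.mem_ball]
    linarith
  · intro h
    have h1 : (⟨r/4, r/2, by positivity, by linarith⟩ : ContDiffBump x0) x0 = 1 :=
      ContDiffBump.one_of_mem_closedBall _ (by simp [Metric.mem_closedBall]; positivity)
    rw [h] at h1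
    simp at h1

lemma tsupport_prod_mul (χ : ℝ → ℝ) (v : E m → ℝ) :
    tsupport (fun x : ℝ × E m => χ x.1 * v x.2) ⊆ tsupport χ ×ˢ tsupport v := by
  have h1 : Function.support (fun x : ℝ × E m => χ x.1 * v x.2) ⊆
      Function.support χ ×ˢ Function.support v := by
    intro x hx
    rw [Function.mem_support] at hx
    exact ⟨Function.mem_support.2 fun h => hx (by simp [h]),
           Function.mem_support.2 fun h => hx (by simp [h])⟩
  refine (closure_minimal (h1.trans ?_) ?_)
  · exact Set.prod_mono (subset_tsupport χ) (subset_tsupport v)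
  · exact (isClosed_tsupport χ).prod (isClosed_tsupport v)

lemma hcs_prod_mul {χ : ℝ → ℝ} {v : E m → ℝ} (hχ : HasCompactSupport χ)
    (hv : HasCompactSupport v) :
    HasCompactSupport (fun x : ℝ × E m => χ x.1 * v x.2) := by
  apply HasCompactSupport.intro (hχ.isCompact.prod hv.isCompact)
  intro x hx
  rcases not_and_or.1 hx with h | h
  · simp [image_eq_zero_of_notMem_tsupport h]
  · simp [image_eq_zero_of_notMem_tsupport h]

lemma prod_mul_fderiv {χ : ℝ → ℝ} {v : E m → ℝ} (hχ : ContDiff ℝ (⊤:ℕ∞) χ)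
    (hv : ContDiff ℝ (⊤:ℕ∞) v) (s : ℝ) (t : E m) :
    dS (fun x : ℝ × E m => χ x.1 * v x.2) (s, t) = deriv χ s * v t ∧
    ∀ μ : Fin m, dT (fun x : ℝ × E m => χ x.1 * v x.2) (s, t) μ =
      χ s * fderiv ℝ v t (EuclideanSpace.single μ 1) := by
  have hc : HasFDerivAt (fun x : ℝ × E m => χ x.1)
      ((fderiv ℝ χ s).comp (ContinuousLinearMap.fst ℝ ℝ (E m))) (s, t) :=
    ((hχ.differentiable (by simp)) s).hasFDerivAt.comp (s, t) hasFDerivAt_fst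
  have hd : HasFDerivAt (fun x : ℝ × E m => v x.2)
      ((fderiv ℝ v t).comp (ContinuousLinearMap.snd ℝ ℝ (E m))) (s, t) :=
    ((hv.differentiable (by simp)) t).hasFDerivAt.comp (s, t) hasFDerivAt_snd
  have hmul := hc.mul hd
  have hfd := hmul.fderiv
  constructor
  · unfold dS
    rw [show (fun x : ℝ × E m => χ x.1 * v x.2) = ((fun x : ℝ × E m => χ x.1) * fun x => v x.2) from rfl, hfd]
    simp [fderiv_apply_one_eq_deriv]
    ring
  · intro μ
    unfold dT
    rw [show (fun x : ℝ × E m => χ x.1 * v x.2) = ((fun x : ℝ × E m => χ x.1) * fun x => v x.2) from rfl, hfd]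
    simp

lemma gradP_prod_bound {p η : ℝ} (hp : 1 < p) (hη : 0 < η) {χ : ℝ → ℝ} {v : E m → ℝ}
    (hχ : ContDiff ℝ (⊤:ℕ∞) χ) (hv : ContDiff ℝ (⊤:ℕ∞) v) (s : ℝ) (t : E m) :
    gradP p (fun x : ℝ × E m => χ x.1 * v x.2) (s, t) ≤
      (1 + 1/η) ^ (p/2) * (|deriv χ s| ^ p * |v t| ^ p) +
      (1 + η) ^ (p/2) * (|χ s| ^ p * ‖fderiv ℝ v t‖ ^ p) := by
  have hp0 : (0:ℝ) < p := by linarith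
  obtain ⟨hdS, hdT⟩ := prod_mul_fderiv hχ hv s t
  unfold gradP
  rw [hdS]
  have hsum : (∑ μ : Fin m, dT (fun x : ℝ × E m => χ x.1 * v x.2) (s, t) μ ^ 2)
      = (χ s * ‖fderiv ℝ v t‖) ^ 2 := by
    have : ∀ μ : Fin m, dT (fun x : ℝ × E m => χ x.1 * v x.2) (s, t) μ ^ 2
        = χ s ^ 2 * (fderiv ℝ v t (EuclideanSpace.single μ 1)) ^ 2 := by
      intro μ; rw [hdT μ]; ring
    rw [Finset.sum_congr rfl fun μ _ => this μ, ← Finset.mul_sum, ← norm_sq_functional]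
    ring
  rw [hsum]
  have hkey := key_ineq (q := p/2) (η := η) (by positivity) hη
    ((deriv χ s * v t) ^ 2) ((χ s * ‖fderiv ℝ v t‖) ^ 2) (sq_nonneg _) (sq_nonneg _)
  have ha : (((deriv χ s * v t) ^ 2 : ℝ)) ^ (p/2) = |deriv χ s| ^ p * |v t| ^ p := by
    rw [sq_rpow_half _ p hp0.le, abs_mul, Real.mul_rpow (abs_nonneg _) (abs_nonneg _)]
  have hb : (((χ s * ‖fderiv ℝ v t‖) ^ 2 : ℝ)) ^ (p/2) = |χ s| ^ p * ‖fderiv ℝ v t‖ ^ p := by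
    rw [sq_rpow_half _ p hp0.le, abs_mul, Real.mul_rpow (abs_nonneg _) (abs_nonneg _),
      abs_of_nonneg (norm_nonneg _)]
  rw [ha, hb] at hkey
  exact hkey

lemma scaled_int (g : ℝ → ℝ) (c T : ℝ) (hT : 0 < T) :
    ∫ s : ℝ, g ((s - c)/T) = T * ∫ y : ℝ, g y := by
  have h1 : ∫ s : ℝ, g ((s - c)/T) = ∫ s : ℝ, g (s/T) :=
    integral_sub_right_eq_self (fun s => g (s/T)) c
  rw [h1, Measure.integral_comp_div g T, abs_of_pos hT, smul_eq_mul]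

lemma contDiff_scaled {χ : ℝ → ℝ} (hχ : ContDiff ℝ (⊤:ℕ∞) χ) (c T : ℝ) :
    ContDiff ℝ (⊤:ℕ∞) (fun s => χ ((s - c)/T)) :=
  hχ.comp ((contDiff_id.sub contDiff_const).div_const T)

lemma deriv_scaled {χ : ℝ → ℝ} (hχ : ContDiff ℝ (⊤:ℕ∞) χ) (c T : ℝ) (s : ℝ) :
    deriv (fun s => χ ((s - c)/T)) s = deriv χ ((s - c)/T) * (1/T) := by
  have h1 : HasDerivAt (fun s : ℝ => (s - c)/T) (1/T) s := by
    simpa using ((hasDerivAt_id s).sub_const c).div_const T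
  have h2 : HasDerivAt χ (deriv χ ((s - c)/T)) ((s - c)/T) :=
    ((hχ.differentiable (by simp)) _).hasDerivAt
  have := h2.comp s h1
  exact this.deriv

lemma tsupport_scaled {χ : ℝ → ℝ} (hχsupp : tsupport χ ⊆ Metric.closedBall 0 2) (c T : ℝ)
    (hT : 0 < T) :
    tsupport (fun s => χ ((s - c)/T)) ⊆ Metric.closedBall c (2*T) := by
  apply closure_minimal _ Metric.isClosed_closedBall
  intro s hs
  rw [Function.mem_support] at hs
  have : (s - c)/T ∈ tsupport χ := subset_tsupport χ (Function.mem_support.2 hs)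
  have h2 := hχsupp this
  simp only [Metric.mem_closedBall, Real.dist_eq, sub_zero] at h2 ⊢
  rw [abs_div, abs_of_pos hT] at h2
  rw [div_le_iff₀ hT] at h2
  linarith

lemma lam1Prod_le {p : ℝ} (hp0 : 0 < p) {ω : Set (E m)} (hωo : IsOpen ω) {K : Set (ℝ × E m)}
    (hK : IsCompact K) {u : ℝ × E m → ℝ} (hu : ContDiff ℝ (⊤:ℕ∞) u) (hcs : HasCompactSupport u)
    (hsupp : tsupport u ⊆ tube ω \ K) (hne : u ≠ 0) :
    lam1Prod p (tube ω \ K) ≤ (∫ x, gradP p u x) / (∫ x, |u x| ^ p) := by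
  have hΩm : MeasurableSet (tube ω \ K) :=
    ((isOpen_univ.prod hωo).measurableSet).diff hK.isClosed.measurableSet
  have hNconv : ∫ x in tube ω \ K, gradP p u x = ∫ x, gradP p u x := by
    apply setIntegral_eq_integral_of_forall_compl_eq_zero
    intro x hx
    exact gradP_eq_zero_of_nmem hp0 fun hc => hx (hsupp hc)
  have hDconv : ∫ x in tube ω \ K, |u x| ^ p = ∫ x, |u x| ^ p := by
    apply setIntegral_eq_integral_of_forall_compl_eq_zero
    intro x hx
    rw [image_eq_zero_of_notMem_tsupport fun hc => hx (hsupp hc)]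
    simp [Real.zero_rpow hp0.ne']
  have hbdd : BddBelow {r : ℝ | ∃ w : ℝ × E m → ℝ, ContDiff ℝ (⊤ : ℕ∞) w ∧ HasCompactSupport w ∧
      tsupport w ⊆ tube ω \ K ∧ w ≠ 0 ∧
      r = (∫ x in tube ω \ K, gradP p w x) / (∫ x in tube ω \ K, |w x| ^ p)} := by
    refine ⟨0, ?_⟩
    rintro r ⟨w, _, _, _, _, rfl⟩
    apply div_nonneg
    · exact setIntegral_nonneg hΩm fun x _ => by unfold gradP; positivity
    · exact setIntegral_nonneg hΩm fun x _ => Real.rpow_nonneg (abs_nonneg _) p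
  have hmem : (∫ x in tube ω \ K, gradP p u x) / (∫ x in tube ω \ K, |u x| ^ p) ∈
      {r : ℝ | ∃ w : ℝ × E m → ℝ, ContDiff ℝ (⊤ : ℕ∞) w ∧ HasCompactSupport w ∧
      tsupport w ⊆ tube ω \ K ∧ w ≠ 0 ∧
      r = (∫ x in tube ω \ K, gradP p w x) / (∫ x in tube ω \ K, |w x| ^ p)} :=
    ⟨u, hu, hcs, hsupp, hne, rfl⟩
  have := csInf_le hbdd hmem
  rw [hNconv, hDconv] at this
  exact this

lemma aux_small (C1 A B ε : ℝ) (hC1 : 0 < C1) (hApos : 0 < A) (hBnn : 0 ≤ B) (hε : 0 < ε) :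
    C1 * (1/(3*C1*(B/A+1)/ε)) * (B/A) ≤ ε/3 := by
  set x := B/A with hx
  have hx0 : 0 ≤ x := by positivity
  have heq : C1 * (1/(3*C1*(x+1)/ε)) * x = ε * x / (3*(x+1)) := by
    field_simp
  rw [heq, div_le_div_iff₀ (by positivity) (by norm_num : (0:ℝ) < 3)]
  nlinarith

set_option maxHeartbeats 1000000 in
lemma upper_bound {p : ℝ} (hp : 1 < p) {ω : Set (E m)} (hωo : IsOpen ω) (hωne : ω.Nonempty)
    {K : Set (ℝ × E m)} (hK : IsCompact K) :
    lam1Prod p (tube ω \ K) ≤ lam1 p ω := by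
  have hp0 : (0:ℝ) < p := by linarith
  apply le_of_forall_pos_le_add
  intro ε hε
  -- pick a near-optimal test function v on ω
  have hSne : {r : ℝ | ∃ v : E m → ℝ, ContDiff ℝ (⊤ : ℕ∞) v ∧ HasCompactSupport v ∧
      tsupport v ⊆ ω ∧ v ≠ 0 ∧
      r = (∫ x in ω, ‖fderiv ℝ v x‖ ^ p) / (∫ x in ω, |v x| ^ p)}.Nonempty := by
    obtain ⟨v0, h1, h2, h3, h4⟩ := exists_test hωo hωne
    exact ⟨_, v0, h1, h2, h3, h4, rfl⟩
  obtain ⟨r, hrmem, hrlt⟩ := Real.lt_sInf_add_pos hSne (by positivity : (0:ℝ) < ε/3)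
  obtain ⟨v, hv, hvcs, hvsupp, hvne, hrq⟩ := hrmem
  rw [show sInf _ = lam1 p ω from rfl] at hrlt
  -- conversions to whole-space integrals
  have hNvconv : ∫ t in ω, ‖fderiv ℝ v t‖ ^ p = ∫ t, ‖fderiv ℝ v t‖ ^ p := by
    apply setIntegral_eq_integral_of_forall_compl_eq_zero
    intro t ht
    rw [fderiv_zero_of_not_mem_tsupport fun hc => ht (hvsupp hc)]
    simp [Real.zero_rpow hp0.ne']
  have hDvconv : ∫ t in ω, |v t| ^ p = ∫ t, |v t| ^ p := by
    apply setIntegral_eq_integral_of_forall_compl_eq_zero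
    intro t ht
    rw [image_eq_zero_of_notMem_tsupport fun hc => ht (hvsupp hc)]
    simp [Real.zero_rpow hp0.ne']
  set Nv := ∫ t, ‖fderiv ℝ v t‖ ^ p with hNv
  set Dv := ∫ t, |v t| ^ p with hDv
  have hDvpos : 0 < Dv := by
    rw [← hDvconv]
    exact int_pos hωo hv.continuous hvcs hvsupp hvne hp0
  have hNvnn : 0 ≤ Nv :=
    integral_nonneg fun t => Real.rpow_nonneg (norm_nonneg _) p
  set Qv := Nv / Dv with hQv
  have hQv0 : 0 ≤ Qv := div_nonneg hNvnn hDvpos.le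
  have hQlt : Qv < lam1 p ω + ε/3 := by
    rw [hQv, ← hNvconv, ← hDvconv] at *
    rw [hrq] at hrlt
    exact hrlt
  -- choose η so that (1+η)^(p/2) = 1 + δ
  set δ := ε/(3*(Qv+1)) with hδdef
  have hδ : 0 < δ := by positivity
  set η := (1+δ) ^ (2/p) - 1 with hηdef
  have hη : 0 < η := by
    rw [hηdef]
    have : (1:ℝ) < (1+δ) ^ (2/p) :=
      (Real.one_lt_rpow_iff_of_pos (by linarith)).2 (Or.inl ⟨by linarith, by positivity⟩)
    linarith
  have hC2 : (1+η) ^ (p/2) = 1 + δ := by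
    rw [hηdef]
    have h1 : (1:ℝ) + ((1+δ) ^ (2/p) - 1) = (1+δ) ^ (2/p) := by ring
    rw [h1, ← Real.rpow_mul (by linarith)]
    have : 2/p * (p/2) = 1 := by field_simp
    rw [this, Real.rpow_one]
  set C1 := (1 + 1/η) ^ (p/2) with hC1def
  have hC1 : 0 < C1 := Real.rpow_pos_of_pos (by positivity) _
  -- the 1d bump
  set χb : ContDiffBump (0:ℝ) := ⟨1, 2, one_pos, one_lt_two⟩ with hχb
  set χ : ℝ → ℝ := ⇑χb with hχdef
  have hχ : ContDiff ℝ (⊤:ℕ∞) χ := χb.contDiff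
  have hχcs : HasCompactSupport χ := χb.hasCompactSupport
  have hχsupp : tsupport χ ⊆ Metric.closedBall 0 2 := by
    rw [hχdef, χb.tsupport_eq]
  set A := ∫ y : ℝ, |χ y| ^ p with hA
  set B := ∫ y : ℝ, |deriv χ y| ^ p with hB
  have hApos : 0 < A := by
    rw [hA, ← setIntegral_univ]
    apply int_pos isOpen_univ hχ.continuous hχcs (subset_univ _) _ hp0
    intro h
    have : χ 0 = 1 := χb.one_of_mem_closedBall (by simp [χb.rIn_pos.le])
    rw [h] at this
    simp at this
  have hBnn : 0 ≤ B := integral_nonneg fun y => Real.rpow_nonneg (abs_nonneg _) p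
  -- choose T
  set M := 3*C1*(B/A+1)/ε with hM
  have hMpos : 0 < M := by positivity
  set T := max 1 M with hT
  have hT1 : (1:ℝ) ≤ T := le_max_left _ _
  have hT0 : (0:ℝ) < T := lt_of_lt_of_le one_pos hT1
  -- choose the center
  obtain ⟨R, hR⟩ := hK.isBounded.subset_closedBall 0
  set c := R + 2*T + 1 with hc
  set χT : ℝ → ℝ := fun s => χ ((s - c)/T) with hχT
  have hχTsm : ContDiff ℝ (⊤:ℕ∞) χT := contDiff_scaled hχ c T
  have hχTsupp : tsupport χT ⊆ Metric.closedBall c (2*T) := tsupport_scaled hχsupp c T hT0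
  have hχTcs : HasCompactSupport χT :=
    HasCompactSupport.intro (isCompact_closedBall c (2*T))
      fun s hs => image_eq_zero_of_notMem_tsupport fun hc2 => hs (hχTsupp hc2)
  -- the test function on the tube
  set u : ℝ × E m → ℝ := fun x => χT x.1 * v x.2 with hu
  have husm : ContDiff ℝ (⊤:ℕ∞) u := (hχTsm.comp contDiff_fst).mul (hv.comp contDiff_snd)
  have hucs : HasCompactSupport u := hcs_prod_mul hχTcs hvcs
  have husupp : tsupport u ⊆ tube ω \ K := by
    intro x hx
    have hx2 := tsupport_prod_mul χT v hx
    constructor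
    · exact ⟨trivial, hvsupp hx2.2⟩
    · intro hxK
      have h1 : |x.1| ≤ R := by
        have := hR hxK
        simp only [Metric.mem_closedBall, Real.dist_eq] at this ⊢
        calc |x.1| ≤ ‖x‖ := by
              rw [show ‖x‖ = max ‖x.1‖ ‖x.2‖ from rfl]
              exact le_max_left _ _
          _ ≤ R := by simpa using this
      have h2 : |x.1 - c| ≤ 2*T := by
        have := hχTsupp hx2.1
        simpa [Real.dist_eq] using this
      have h3 : x.1 ≥ c - 2*T := by
        have := abs_le.1 h2
        linarith [this.1]
      have h4 : x.1 ≤ R := (abs_le.1 h1).2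
      rw [hc] at h3
      linarith
  have hune : u ≠ 0 := by
    obtain ⟨t0, ht0⟩ := Function.ne_iff.1 hvne
    have hχTc : χT c = 1 := by
      rw [hχT]
      simp only [sub_self, zero_div]
      exact χb.one_of_mem_closedBall (by simp [χb.rIn_pos.le])
    apply Function.ne_iff.2
    refine ⟨(c, t0), ?_⟩
    simp only [hu, hχTc, one_mul]
    exact ht0
  -- integrals of the scaled bump
  have hIT : ∫ s : ℝ, |χT s| ^ p = T * A := by
    rw [hχT, hA]
    exact scaled_int (fun y => |χ y| ^ p) c T hT0
  have hJT : ∫ s : ℝ, |deriv χT s| ^ p = (1/T) ^ p * (T * B) := by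
    have h1 : ∀ s, |deriv χT s| ^ p = (1/T) ^ p * ((fun y => |deriv χ y| ^ p) ((s - c)/T)) := by
      intro s
      rw [hχT, deriv_scaled hχ c T s, abs_mul,
        Real.mul_rpow (abs_nonneg _) (abs_nonneg _), abs_of_pos (by positivity : (0:ℝ) < 1/T)]
      ring
    rw [funext h1, integral_const_mul, scaled_int (fun y => |deriv χ y| ^ p) c T hT0]
  -- integrability of factors
  have hg1c : Continuous fun s => |deriv χT s| ^ p :=
    cont_abs_rpow (hχTsm.continuous_deriv (by simp)) hp0.le
  have hderivTcs : HasCompactSupport (deriv χT) :=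
    HasCompactSupport.intro hχTcs.isCompact fun s hs => by
      by_contra hne2
      exact hs (support_deriv_subset (Function.mem_support.2 hne2))
  have hg1i : Integrable (fun s => |deriv χT s| ^ p) :=
    hg1c.integrable_of_hasCompactSupport (hcs_abs_rpow hderivTcs hp0)
  have hg2i : Integrable (fun s => |χT s| ^ p) :=
    (cont_abs_rpow hχTsm.continuous hp0.le).integrable_of_hasCompactSupport
      (hcs_abs_rpow hχTcs hp0)
  have hh1i : Integrable (fun t : E m => |v t| ^ p) :=
    (cont_abs_rpow hv.continuous hp0.le).integrable_of_hasCompactSupport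
      (hcs_abs_rpow hvcs hp0)
  have hh2c : Continuous fun t : E m => ‖fderiv ℝ v t‖ ^ p :=
    ((hv.continuous_fderiv (by simp)).norm).rpow_const fun _ => Or.inr hp0.le
  have hh2cs : HasCompactSupport fun t : E m => ‖fderiv ℝ v t‖ ^ p := by
    apply HasCompactSupport.intro hvcs.isCompact
    intro t ht
    rw [fderiv_zero_of_not_mem_tsupport ht]
    simp [Real.zero_rpow hp0.ne']
  have hh2i : Integrable (fun t : E m => ‖fderiv ℝ v t‖ ^ p) :=
    hh2c.integrable_of_hasCompactSupport hh2cs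
  have hGui : Integrable (gradP p u) :=
    (cont_gradP hp0.le husm).integrable_of_hasCompactSupport (hcs_gradP hp0 hucs)
  -- numerator bound
  have hvolprod : (volume : Measure (ℝ × E m)) = (volume : Measure ℝ).prod volume :=
    Measure.volume_eq_prod ℝ (E m)
  have hRHSi : Integrable (fun x : ℝ × E m =>
      C1 * (|deriv χT x.1| ^ p * |v x.2| ^ p) + (1+η) ^ (p/2) * (|χT x.1| ^ p * ‖fderiv ℝ v x.2‖ ^ p))
      ((volume : Measure ℝ).prod volume) :=
    ((hg1i.mul_prod hh1i).const_mul C1).add ((hg2i.mul_prod hh2i).const_mul _)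
  have hNum : ∫ x, gradP p u x ≤ C1 * ((1/T) ^ p * (T * B) * Dv) + (1+δ) * ((T * A) * Nv) := by
    rw [hvolprod]
    have hmono := integral_mono (by rwa [← hvolprod]) hRHSi
      (fun x => gradP_prod_bound hp hη hχTsm hv x.1 x.2)
    refine le_trans hmono (le_of_eq ?_)
    rw [integral_add ((hg1i.mul_prod hh1i).const_mul C1) ((hg2i.mul_prod hh2i).const_mul _),
      integral_const_mul, integral_const_mul]
    have e1 : ∫ (a : ℝ × E m), |deriv χT a.1| ^ p * |v a.2| ^ p ∂((volume : Measure ℝ).prod volume)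
        = (∫ s : ℝ, |deriv χT s| ^ p) * (∫ t : E m, |v t| ^ p) :=
      integral_prod_mul (f := fun s : ℝ => |deriv χT s| ^ p) (g := fun t : E m => |v t| ^ p)
    have e2 : ∫ (a : ℝ × E m), |χT a.1| ^ p * ‖fderiv ℝ v a.2‖ ^ p ∂((volume : Measure ℝ).prod volume)
        = (∫ s : ℝ, |χT s| ^ p) * (∫ t : E m, ‖fderiv ℝ v t‖ ^ p) :=
      integral_prod_mul (f := fun s : ℝ => |χT s| ^ p) (g := fun t : E m => ‖fderiv ℝ v t‖ ^ p)
    rw [e1, e2, hJT, hIT, hC2]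
  -- denominator
  have hDen : ∫ x, |u x| ^ p = (T * A) * Dv := by
    have h2 : ∀ x : ℝ × E m, |u x| ^ p = |χT x.1| ^ p * |v x.2| ^ p := by
      intro x
      rw [hu]
      rw [abs_mul, Real.mul_rpow (abs_nonneg _) (abs_nonneg _)]
    have e3 : ∫ (a : ℝ × E m), |χT a.1| ^ p * |v a.2| ^ p ∂((volume : Measure ℝ).prod volume)
        = (∫ s : ℝ, |χT s| ^ p) * (∫ t : E m, |v t| ^ p) :=
      integral_prod_mul (f := fun s : ℝ => |χT s| ^ p) (g := fun t : E m => |v t| ^ p)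
    rw [funext h2, hvolprod, e3, hIT]
  have hITpos : 0 < T * A := by positivity
  -- put everything together
  have hle1 : lam1Prod p (tube ω \ K) ≤ (∫ x, gradP p u x) / (∫ x, |u x| ^ p) :=
    lam1Prod_le hp0 hωo hK husm hucs husupp hune
  have hle2 : (∫ x, gradP p u x) / (∫ x, |u x| ^ p) ≤
      (C1 * ((1/T) ^ p * (T * B) * Dv) + (1+δ) * ((T * A) * Nv)) / ((T * A) * Dv) := by
    rw [hDen]
    exact (div_le_div_iff_of_pos_right (mul_pos hITpos hDvpos)).2 hNum
  have hle3 : (C1 * ((1/T) ^ p * (T * B) * Dv) + (1+δ) * ((T * A) * Nv)) / ((T * A) * Dv)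
      = C1 * ((1/T) ^ p) * (B/A) + (1+δ) * Qv := by
    rw [hQv]
    field_simp
  have hsmall : C1 * ((1/T) ^ p) * (B/A) ≤ ε/3 := by
    have ht1 : (1/T : ℝ) ^ p ≤ 1/T := by
      have := Real.rpow_le_rpow_of_exponent_ge (by positivity : (0:ℝ) < 1/T)
        (by rw [div_le_one hT0]; exact hT1) hp.le
      rwa [Real.rpow_one] at this
    have ht2 : (1/T : ℝ) ≤ 1/M := by
      apply one_div_le_one_div_of_le hMpos (le_max_right 1 M)
    have hx0 : (0:ℝ) ≤ B/A := by positivity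
    have hstep : C1 * ((1/T) ^ p) * (B/A) ≤ C1 * (1/M) * (B/A) := by
      have h4 : (1/T : ℝ) ^ p ≤ 1/M := ht1.trans ht2
      exact mul_le_mul_of_nonneg_right (mul_le_mul_of_nonneg_left h4 hC1.le) hx0
    refine hstep.trans ?_
    rw [hM]
    exact aux_small C1 A B ε hC1 hApos hBnn hε
  have hC2Q : (1+δ) * Qv ≤ Qv + ε/3 := by
    have hδQ : δ * (Qv + 1) = ε/3 := by
      rw [hδdef]
      field_simp
    calc (1+δ) * Qv = Qv + (δ * (Qv+1)) - δ := by ring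
      _ = Qv + ε/3 - δ := by rw [hδQ]
      _ ≤ Qv + ε/3 := by linarith
  calc lam1Prod p (tube ω \ K) ≤ (∫ x, gradP p u x) / (∫ x, |u x| ^ p) := hle1
    _ ≤ _ := hle2
    _ = C1 * ((1/T) ^ p) * (B/A) + (1+δ) * Qv := hle3
    _ ≤ ε/3 + (Qv + ε/3) := by linarith
    _ ≤ lam1 p ω + ε := by linarith


/-- The essential spectral threshold of the straight tube `Ω₀ = ℝ × ω`, defined as
`sup_{K compact ⊆ Ω₀} λ₁(Ω₀ \ K)`, equals the spectral threshold of the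
cross-section `ω`. -/
theorem stmt_15 {m : ℕ} (hm : 1 ≤ m) (p : ℝ) (hp : 1 < p)
    (ω : Set (E m)) (hωopen : IsOpen ω) (hωne : ω.Nonempty)
    (hωbdd : Bornology.IsBounded ω) (hωconn : IsConnected ω) :
    sSup {r : ℝ | ∃ K : Set (ℝ × E m), IsCompact K ∧ K ⊆ tube ω ∧
        r = lam1Prod p (tube ω \ K)} = lam1 p ω := by
  have hp0 : (0:ℝ) < p := by linarith
  have htubeo : IsOpen (tube ω) := isOpen_univ.prod hωopen
  have hne : {r : ℝ | ∃ K : Set (ℝ × E m), IsCompact K ∧ K ⊆ tube ω ∧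
      r = lam1Prod p (tube ω \ K)}.Nonempty :=
    ⟨lam1Prod p (tube ω \ ∅), ∅, isCompact_empty, empty_subset _, rfl⟩
  apply le_antisymm
  · apply csSup_le hne
    rintro r ⟨K, hK, hKsub, rfl⟩
    exact upper_bound hp hωopen hωne hK
  · have hbdd : BddAbove {r : ℝ | ∃ K : Set (ℝ × E m), IsCompact K ∧ K ⊆ tube ω ∧
        r = lam1Prod p (tube ω \ K)} := by
      refine ⟨lam1 p ω, ?_⟩
      rintro r ⟨K, hK, hKsub, rfl⟩
      exact upper_bound hp hωopen hωne hK
    have hmem : lam1Prod p (tube ω \ ∅) ∈ {r : ℝ | ∃ K : Set (ℝ × E m), IsCompact K ∧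
        K ⊆ tube ω ∧ r = lam1Prod p (tube ω \ K)} :=
      ⟨∅, isCompact_empty, empty_subset _, rfl⟩
    refine le_trans ?_ (le_csSup hbdd hmem)
    rw [diff_empty]
    -- lam1 p ω ≤ lam1Prod p (tube ω)
    have htubene : (tube ω).Nonempty := by
      obtain ⟨x0, hx0⟩ := hωne
      exact ⟨(0, x0), trivial, hx0⟩
    have hSne : {r : ℝ | ∃ u : ℝ × E m → ℝ, ContDiff ℝ (⊤ : ℕ∞) u ∧ HasCompactSupport u ∧
        tsupport u ⊆ tube ω ∧ u ≠ 0 ∧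
        r = (∫ x in tube ω, gradP p u x) / (∫ x in tube ω, |u x| ^ p)}.Nonempty := by
      obtain ⟨u0, h1, h2, h3, h4⟩ := exists_test htubeo htubene
      exact ⟨_, u0, h1, h2, h3, h4, rfl⟩
    apply le_csInf hSne
    rintro r ⟨u, hu, hcs, hsupp, hune, rfl⟩
    have hDpos : 0 < ∫ x in tube ω, |u x| ^ p :=
      int_pos htubeo hu.continuous hcs hsupp hune hp0
    have hNconv : ∫ x in tube ω, gradP p u x = ∫ x, gradP p u x := by
      apply setIntegral_eq_integral_of_forall_compl_eq_zero
      intro x hx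
      exact gradP_eq_zero_of_nmem hp0 fun hc => hx (hsupp hc)
    have hDconv : ∫ x in tube ω, |u x| ^ p = ∫ x, |u x| ^ p := by
      apply setIntegral_eq_integral_of_forall_compl_eq_zero
      intro x hx
      rw [image_eq_zero_of_notMem_tsupport fun hc => hx (hsupp hc)]
      simp [Real.zero_rpow hp0.ne']
    have hQL := quotient_lower hp hωopen hu hcs hsupp
    rw [hNconv, hDconv, le_div_iff₀ (by rwa [hDconv] at hDpos)]
    exact hQL
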